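/- Fix an integer p ≥ 1, set n = 2p, and let θ, the couplings g_{ab} (with g ≠ 0 and g_2 arbitrary real numbers), and the matrices F_{ab} be as in the q = p case of the AIII construction. Then for all indices 1 ≤ a, b, c, d ≤ n with a ≠ b and c ≠ d, the symmetric-pair combinatoric identity holds: 2·g_{cd}·((F_{ab})_{cc} − (F_{ab})_{dd}) = (1/4)·Σ_{(x,y) ∈ {(a,b),(b,a)}} [ g_{cy}·δ(d,x) − g_{dx}·δ(c,y) + g_{θ(c)y}·δ(θ(d),x) − g_{θ(d)x}·δ(θ(c),y) + g_{cθ(y)}·δ(d,θ(x)) − g_{dθ(x)}·δ(c,θ(y)) + g_{θ(c)θ(y)}·δ(θ(d),θ(x)) − g_{θ(d)θ(x)}·δ(θ(c),θ(y)) ]. (This is the existence part of Theorem 3.3 for the symmetric pairs of the AIII-series with q = p, corresponding to the complex Grassmannians SU(p,p)/S(U(p)×U(p)).) -/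

import Mathlib

open Matrix

/-- The involution `θ` of `{1,…,2p}` (0-based: `{0,…,2p−1}`) exchanging the first
and third blocks: `θ(a) = a + p` for `a < p` and `θ(a) = a − p` otherwise. -/
def theta1 (p : ℕ) (a : Fin (2*p)) : Fin (2*p) :=
  if h : (a : ℕ) < p then ⟨a + p, by omega⟩
  else ⟨(a : ℕ) - p, by have := a.isLt; omega⟩

/-- The coupling constants for the AIII construction with `q = p`:
`g_{aa} = 0`, `g_{ab} = g₂` if `b = θ(a)`, and `g_{ab} = g` otherwise. -/
def g10 (p : ℕ) (g g2 : ℝ) (a b : Fin (2*p)) : ℝ :=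
  if a = b then 0 else if b = theta1 p a then g2 else g

/-- The matrices `F_{ab} = -(1/4)(E_{aa} + E_{θ(a)θ(a)} + E_{bb} + E_{θ(b)θ(b)}) + (1/n)·1`
for the AIII construction with `q = p`, `n = 2p`. -/
noncomputable def F10 (p : ℕ) (a b : Fin (2*p)) : Matrix (Fin (2*p)) (Fin (2*p)) ℝ :=
  -(1/4 : ℝ) • (single a a 1 + single (theta1 p a) (theta1 p a) 1
      + single b b 1 + single (theta1 p b) (theta1 p b) 1)
    + ((2*p : ℝ))⁻¹ • 1

/-- Kronecker delta. -/
def kd {n : ℕ} (i j : Fin n) : ℝ := if i = j then 1 else 0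

lemma theta1_val (p : ℕ) (a : Fin (2*p)) :
    ((theta1 p a : Fin (2*p)) : ℕ) = if (a : ℕ) < p then (a : ℕ) + p else (a : ℕ) - p := by
  unfold theta1; split_ifs <;> rfl

lemma theta1_invol (p : ℕ) (a : Fin (2*p)) : theta1 p (theta1 p a) = a := by
  have := a.isLt
  rw [Fin.ext_iff, theta1_val, theta1_val]
  split_ifs <;> omega

lemma theta1_ne (p : ℕ) (a : Fin (2*p)) : theta1 p a ≠ a := by
  have := a.isLt
  rw [Ne, Fin.ext_iff, theta1_val]
  split_ifs <;> omega

lemma theta1_ne' (p : ℕ) (a : Fin (2*p)) : a ≠ theta1 p a := (theta1_ne p a).symm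

lemma theta1_inj (p : ℕ) (a b : Fin (2*p)) : theta1 p a = theta1 p b ↔ a = b := by
  constructor
  · intro h
    have := congrArg (theta1 p) h
    rwa [theta1_invol, theta1_invol] at this
  · rintro rfl; rfl

lemma theta1_swap (p : ℕ) (x y : Fin (2*p)) : x = theta1 p y ↔ y = theta1 p x := by
  constructor <;> rintro rfl <;> rw [theta1_invol]

lemma std_diag {n : ℕ} (i x : Fin n) : single i i (1:ℝ) x x = if i = x then 1 else 0 := by
  simp [single, Matrix.of_apply, and_self]

lemma F10_diag (p : ℕ) (a b x : Fin (2*p)) : F10 p a b x x =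
    -(1/4:ℝ)*((if a = x then (1:ℝ) else 0)+(if theta1 p a = x then 1 else 0)
      +(if b = x then 1 else 0)+(if theta1 p b = x then 1 else 0)) + (2*(p:ℝ))⁻¹ := by
  simp only [F10, Matrix.add_apply, Matrix.smul_apply, Matrix.one_apply_eq, std_diag,
    smul_eq_mul, mul_one]

set_option maxHeartbeats 2000000 in
theorem stmt_10 (p : ℕ) (hp : 1 ≤ p) (g g2 : ℝ) (hg : g ≠ 0)
    (a b c d : Fin (2*p)) (hab : a ≠ b) (hcd : c ≠ d) :
    2 * g10 p g g2 c d * (F10 p a b c c - F10 p a b d d) =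
      (1/4 : ℝ) *
       ((g10 p g g2 c b * kd d a - g10 p g g2 d a * kd c b
         + g10 p g g2 (theta1 p c) b * kd (theta1 p d) a
         - g10 p g g2 (theta1 p d) a * kd (theta1 p c) b
         + g10 p g g2 c (theta1 p b) * kd d (theta1 p a)
         - g10 p g g2 d (theta1 p a) * kd c (theta1 p b)
         + g10 p g g2 (theta1 p c) (theta1 p b) * kd (theta1 p d) (theta1 p a)
         - g10 p g g2 (theta1 p d) (theta1 p a) * kd (theta1 p c) (theta1 p b))
        +
        (g10 p g g2 c a * kd d b - g10 p g g2 d b * kd c a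
         + g10 p g g2 (theta1 p c) a * kd (theta1 p d) b
         - g10 p g g2 (theta1 p d) b * kd (theta1 p c) a
         + g10 p g g2 c (theta1 p a) * kd d (theta1 p b)
         - g10 p g g2 d (theta1 p b) * kd c (theta1 p a)
         + g10 p g g2 (theta1 p c) (theta1 p a) * kd (theta1 p d) (theta1 p b)
         - g10 p g g2 (theta1 p d) (theta1 p b) * kd (theta1 p c) (theta1 p a))) := by
  rw [F10_diag, F10_diag]
  by_cases h1 : c = a <;> by_cases h2 : c = b <;> by_cases h3 : c = theta1 p a <;>
    by_cases h4 : c = theta1 p b <;> by_cases h5 : d = a <;> by_cases h6 : d = b <;>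
    by_cases h7 : d = theta1 p a <;> by_cases h8 : d = theta1 p b <;>
    by_cases h9 : b = theta1 p a <;>
    simp_all only [g10, kd, theta1_invol, theta1_inj, theta1_ne, theta1_ne', theta1_swap,
      eq_comm, ne_eq, if_true, if_false, not_false_eq_true, ite_true, ite_false,
      not_true_eq_false, false_and, true_and, and_true, ite_self] <;>
    ring_nf
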